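/- Let ω, β ∈ ℝ, let V : ℝ² → ℝ, and let u : ℝ × ℝ² → ℂ be twice continuously differentiable. For t ∈ ℝ let A(t) be the rotation matrix A(t) = [[cos(ωt), sin(ωt)], [−sin(ωt), cos(ωt)]], and define ũ(t, x̃) := u(t, A(t)x̃). If u satisfies the rotating Gross–Pitaevskii equation i∂_t u + (1/2)Δu − V·u − β|u|²u + ω·L_z u = 0 at every point of ℝ × ℝ², where L_z u = −i(x ∂_y u − y ∂_x u), then ũ satisfies the rotation-free nonlinear Schrödinger equation with time-dependent potential: i∂_t ũ(t, x̃) + (1/2)Δ_{x̃} ũ(t, x̃) − V(A(t)x̃)·ũ(t, x̃) − β|ũ(t, x̃)|²ũ(t, x̃) = 0 at every point (t, x̃) ∈ ℝ × ℝ². -/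

import Mathlib

/-- Partial derivative in the first spatial variable. -/
noncomputable def pderivX (u : ℝ × ℝ → ℂ) (z : ℝ × ℝ) : ℂ :=
  deriv (fun x => u (x, z.2)) z.1

/-- Partial derivative in the second spatial variable. -/
noncomputable def pderivY (u : ℝ × ℝ → ℂ) (z : ℝ × ℝ) : ℂ :=
  deriv (fun y => u (z.1, y)) z.2

/-- The Laplacian `Δu = ∂²u/∂x² + ∂²u/∂y²` on `ℝ²`. -/
noncomputable def lap2 (u : ℝ × ℝ → ℂ) (z : ℝ × ℝ) : ℂ :=
  pderivX (pderivX u) z + pderivY (pderivY u) z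

/-- The `z`-component of the angular momentum operator `L_z u = −i(x ∂_y u − y ∂_x u)`. -/
noncomputable def Lz (u : ℝ × ℝ → ℂ) (z : ℝ × ℝ) : ℂ :=
  -Complex.I * ((z.1 : ℂ) * pderivY u z - (z.2 : ℂ) * pderivX u z)

/-- The rotation `A(t) = [[cos ωt, sin ωt], [−sin ωt, cos ωt]]` acting on `ℝ²`. -/
noncomputable def rot (ω t : ℝ) (z : ℝ × ℝ) : ℝ × ℝ :=
  (Real.cos (ω * t) * z.1 + Real.sin (ω * t) * z.2,
   -Real.sin (ω * t) * z.1 + Real.cos (ω * t) * z.2)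

noncomputable def rotCLM (ω t : ℝ) : (ℝ × ℝ) →L[ℝ] (ℝ × ℝ) :=
  ((Real.cos (ω*t)) • (ContinuousLinearMap.fst ℝ ℝ ℝ)
    + (Real.sin (ω*t)) • (ContinuousLinearMap.snd ℝ ℝ ℝ)).prod
  ((-Real.sin (ω*t)) • (ContinuousLinearMap.fst ℝ ℝ ℝ)
    + (Real.cos (ω*t)) • (ContinuousLinearMap.snd ℝ ℝ ℝ))

lemma rotCLM_apply (ω t : ℝ) (z : ℝ × ℝ) : rotCLM ω t z = rot ω t z := by
  simp [rotCLM, rot]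

lemma pderivX_eq (f : ℝ × ℝ → ℂ) (z : ℝ × ℝ) (hf : DifferentiableAt ℝ f z) :
    pderivX f z = fderiv ℝ f z (1, 0) := by
  have h1 : HasDerivAt (fun x : ℝ => ((x, z.2) : ℝ × ℝ)) ((1 : ℝ), (0 : ℝ)) z.1 :=
    HasDerivAt.prodMk (hasDerivAt_id _) (hasDerivAt_const _ _)
  exact (hf.hasFDerivAt.comp_hasDerivAt z.1 h1).deriv

lemma pderivY_eq (f : ℝ × ℝ → ℂ) (z : ℝ × ℝ) (hf : DifferentiableAt ℝ f z) :
    pderivY f z = fderiv ℝ f z (0, 1) := by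
  have h1 : HasDerivAt (fun y : ℝ => ((z.1, y) : ℝ × ℝ)) ((0 : ℝ), (1 : ℝ)) z.2 :=
    HasDerivAt.prodMk (hasDerivAt_const _ _) (hasDerivAt_id _)
  exact (hf.hasFDerivAt.comp_hasDerivAt z.2 h1).deriv

lemma tderiv_eq (F : ℝ × (ℝ × ℝ) → ℂ) (t : ℝ) (q : ℝ × ℝ)
    (hF : DifferentiableAt ℝ F (t, q)) :
    deriv (fun s => F (s, q)) t = fderiv ℝ F (t, q) (1, 0) :=
  (hF.hasFDerivAt.comp_hasDerivAt t (HasDerivAt.prodMk (hasDerivAt_id t) (hasDerivAt_const t q))).deriv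

lemma fderiv_fderiv_apply (f : ℝ × ℝ → ℂ) (hDf : Differentiable ℝ (fderiv ℝ f))
    (p v w : ℝ × ℝ) :
    fderiv ℝ (fun x => fderiv ℝ f x v) p w = fderiv ℝ (fderiv ℝ f) p w v := by
  have h := ((ContinuousLinearMap.apply ℝ ℂ v).hasFDerivAt.comp p (hDf p).hasFDerivAt).fderiv
  rw [show (fun x => fderiv ℝ f x v) = (ContinuousLinearMap.apply ℝ ℂ v) ∘ (fderiv ℝ f) from rfl, h]
  rfl

lemma fderiv_comp_clm (f : ℝ × ℝ → ℂ) (hf : Differentiable ℝ f)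
    (L : (ℝ × ℝ) →L[ℝ] (ℝ × ℝ)) (z : ℝ × ℝ) :
    fderiv ℝ (fun w => f (L w)) z = (fderiv ℝ f (L z)).comp L :=
  ((hf (L z)).hasFDerivAt.comp z L.hasFDerivAt).fderiv

lemma pderivX_comp_clm (f : ℝ × ℝ → ℂ) (hf : Differentiable ℝ f)
    (L : (ℝ × ℝ) →L[ℝ] (ℝ × ℝ)) (z : ℝ × ℝ) :
    pderivX (fun w => f (L w)) z = fderiv ℝ f (L z) (L (1, 0)) := by
  have hd : DifferentiableAt ℝ (fun w => f (L w)) z :=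
    (hf (L z)).comp z L.differentiable.differentiableAt
  rw [pderivX_eq _ _ hd, fderiv_comp_clm f hf L z]
  rfl

lemma pderivY_comp_clm (f : ℝ × ℝ → ℂ) (hf : Differentiable ℝ f)
    (L : (ℝ × ℝ) →L[ℝ] (ℝ × ℝ)) (z : ℝ × ℝ) :
    pderivY (fun w => f (L w)) z = fderiv ℝ f (L z) (L (0, 1)) := by
  have hd : DifferentiableAt ℝ (fun w => f (L w)) z :=
    (hf (L z)).comp z L.differentiable.differentiableAt
  rw [pderivY_eq _ _ hd, fderiv_comp_clm f hf L z]
  rfl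

lemma pderivXX_comp_clm (f : ℝ × ℝ → ℂ) (hf : ContDiff ℝ 2 f)
    (L : (ℝ × ℝ) →L[ℝ] (ℝ × ℝ)) (z : ℝ × ℝ) :
    pderivX (pderivX (fun w => f (L w))) z
      = fderiv ℝ (fderiv ℝ f) (L z) (L (1, 0)) (L (1, 0)) := by
  have hfd : Differentiable ℝ f := hf.differentiable (by norm_num)
  have hDf : Differentiable ℝ (fderiv ℝ f) :=
    (hf.fderiv_right (m := 1) (by norm_num)).differentiable one_ne_zero
  have hφ : Differentiable ℝ (fun x => fderiv ℝ f x (L (1, 0))) :=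
    ((ContinuousLinearMap.apply ℝ ℂ (L (1, 0))).differentiable).comp hDf
  have h1 : pderivX (fun w => f (L w)) = fun w => (fun x => fderiv ℝ f x (L (1, 0))) (L w) :=
    funext fun w => pderivX_comp_clm f hfd L w
  rw [h1, pderivX_comp_clm _ hφ L z, fderiv_fderiv_apply f hDf (L z) (L (1, 0)) (L (1, 0))]

lemma pderivYY_comp_clm (f : ℝ × ℝ → ℂ) (hf : ContDiff ℝ 2 f)
    (L : (ℝ × ℝ) →L[ℝ] (ℝ × ℝ)) (z : ℝ × ℝ) :
    pderivY (pderivY (fun w => f (L w))) z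
      = fderiv ℝ (fderiv ℝ f) (L z) (L (0, 1)) (L (0, 1)) := by
  have hfd : Differentiable ℝ f := hf.differentiable (by norm_num)
  have hDf : Differentiable ℝ (fderiv ℝ f) :=
    (hf.fderiv_right (m := 1) (by norm_num)).differentiable one_ne_zero
  have hφ : Differentiable ℝ (fun x => fderiv ℝ f x (L (0, 1))) :=
    ((ContinuousLinearMap.apply ℝ ℂ (L (0, 1))).differentiable).comp hDf
  have h1 : pderivY (fun w => f (L w)) = fun w => (fun x => fderiv ℝ f x (L (0, 1))) (L w) :=
    funext fun w => pderivY_comp_clm f hfd L w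
  rw [h1, pderivY_comp_clm _ hφ L z, fderiv_fderiv_apply f hDf (L z) (L (0, 1)) (L (0, 1))]

lemma lap2_comp_clm (f : ℝ × ℝ → ℂ) (hf : ContDiff ℝ 2 f)
    (L : (ℝ × ℝ) →L[ℝ] (ℝ × ℝ)) (z : ℝ × ℝ) :
    lap2 (fun w => f (L w)) z
      = fderiv ℝ (fderiv ℝ f) (L z) (L (1, 0)) (L (1, 0))
        + fderiv ℝ (fderiv ℝ f) (L z) (L (0, 1)) (L (0, 1)) := by
  rw [lap2, pderivXX_comp_clm f hf L z, pderivYY_comp_clm f hf L z]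

lemma lap2_eq (f : ℝ × ℝ → ℂ) (hf : ContDiff ℝ 2 f) (q : ℝ × ℝ) :
    lap2 f q = fderiv ℝ (fderiv ℝ f) q (1, 0) (1, 0)
      + fderiv ℝ (fderiv ℝ f) q (0, 1) (0, 1) := by
  have h := lap2_comp_clm f hf (ContinuousLinearMap.id ℝ (ℝ × ℝ)) q
  simpa using h


/-- If `u` solves the rotating Gross–Pitaevskii equation
`i∂ₜu + (1/2)Δu − Vu − β|u|²u + ωL_z u = 0`, then `ũ(t,x̃) = u(t, A(t)x̃)` solves the
rotation-free nonlinear Schrödinger equation with the time-dependent potential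
`V(A(t)x̃)`. -/
theorem gpe_rotating_frame (ω β : ℝ) (V : ℝ × ℝ → ℝ) (u : ℝ → ℝ × ℝ → ℂ)
    (hu : ContDiff ℝ 2 (fun p : ℝ × (ℝ × ℝ) => u p.1 p.2))
    (hgpe : ∀ (t : ℝ) (z : ℝ × ℝ),
      Complex.I * deriv (fun s => u s z) t
        + (1 / 2) * lap2 (u t) z
        - (V z : ℂ) * u t z
        - (β : ℂ) * (‖u t z‖ : ℂ) ^ 2 * u t z
        + (ω : ℂ) * Lz (u t) z = 0) :
    ∀ (t : ℝ) (z : ℝ × ℝ),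
      Complex.I * deriv (fun s => u s (rot ω s z)) t
        + (1 / 2) * lap2 (fun w => u t (rot ω t w)) z
        - (V (rot ω t z) : ℂ) * u t (rot ω t z)
        - (β : ℂ) * (‖u t (rot ω t z)‖ : ℂ) ^ 2 * u t (rot ω t z) = 0 := by
  intro t z
  have hF : ContDiff ℝ 2 (fun p : ℝ × (ℝ × ℝ) => u p.1 p.2) := hu
  have hFd : Differentiable ℝ (fun p : ℝ × (ℝ × ℝ) => u p.1 p.2) :=
    hF.differentiable (by norm_num)
  set q : ℝ × ℝ := rot ω t z with hq
  set c : ℝ := Real.cos (ω * t) with hc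
  set s : ℝ := Real.sin (ω * t) with hs
  have hf : ContDiff ℝ 2 (u t) := hF.comp (contDiff_const.prodMk contDiff_id)
  have hfd : Differentiable ℝ (u t) := hf.differentiable (by norm_num)
  have hDf : Differentiable ℝ (fderiv ℝ (u t)) :=
    (hf.fderiv_right (m := 1) (by norm_num)).differentiable one_ne_zero
  -- the second derivative bilinear form at q
  set D : (ℝ × ℝ) →L[ℝ] ((ℝ × ℝ) →L[ℝ] ℂ) := fderiv ℝ (fderiv ℝ (u t)) q with hD
  have hbil : ∀ a b : ℝ, D (a, b) (a, b)
      = (a : ℂ) ^ 2 * D (1, 0) (1, 0) + (a : ℂ) * (b : ℂ) * D (1, 0) (0, 1)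
        + (b : ℂ) * (a : ℂ) * D (0, 1) (1, 0) + (b : ℂ) ^ 2 * D (0, 1) (0, 1) := by
    intro a b
    have hab : ((a, b) : ℝ × ℝ) = a • ((1 : ℝ), (0 : ℝ)) + b • ((0 : ℝ), (1 : ℝ)) := by
      simp [Prod.ext_iff]
    rw [hab]
    simp only [map_add, map_smul, ContinuousLinearMap.add_apply,
      ContinuousLinearMap.smul_apply, Complex.real_smul]
    ring
  -- rotation constants
  have hrotL : ∀ w : ℝ × ℝ, rotCLM ω t w = rot ω t w := rotCLM_apply ω t
  have hL10 : rotCLM ω t (1, 0) = (c, -s) := by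
    rw [hrotL]; simp [rot, hc, hs]
  have hL01 : rotCLM ω t (0, 1) = (s, c) := by
    rw [hrotL]; simp [rot, hc, hs]
  -- Laplacian of the composed function
  have hlapg : lap2 (fun w => u t (rot ω t w)) z = lap2 (u t) q := by
    have hfun : (fun w => u t (rot ω t w)) = fun w => u t (rotCLM ω t w) := by
      funext w; rw [hrotL]
    rw [hfun, lap2_comp_clm (u t) hf (rotCLM ω t) z, lap2_eq (u t) hf q,
      hrotL, ← hq, hL10, hL01, ← hD]
    have h1 : (s : ℂ) ^ 2 + (c : ℂ) ^ 2 = 1 := by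
      norm_cast; exact Real.sin_sq_add_cos_sq (ω * t)
    rw [hbil c (-s), hbil s c]
    push_cast
    linear_combination (D (1, 0) (1, 0) + D (0, 1) (0, 1)) * h1
  -- time derivative
  have hcd : HasDerivAt (fun s' : ℝ => Real.cos (ω * s')) (-s * ω) t := by
    have := (Real.hasDerivAt_cos (ω * t)).comp t ((hasDerivAt_id t).const_mul ω)
    simpa [hs, mul_comm, Function.comp_def] using this
  have hsd : HasDerivAt (fun s' : ℝ => Real.sin (ω * s')) (c * ω) t := by
    have := (Real.hasDerivAt_sin (ω * t)).comp t ((hasDerivAt_id t).const_mul ω)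
    simpa [hc, mul_comm, Function.comp_def] using this
  have hd1 : HasDerivAt (fun s' => rot ω s' z) (ω * q.2, -(ω * q.1)) t := by
    have h1 := (hcd.mul_const z.1).add (hsd.mul_const z.2)
    have h2 := ((hsd.neg).mul_const z.1).add (hcd.mul_const z.2)
    have h3 := HasDerivAt.prodMk h1 h2
    have he : ((ω * q.2, -(ω * q.1)) : ℝ × ℝ)
        = (-s * ω * z.1 + c * ω * z.2, -(c * ω) * z.1 + -s * ω * z.2) := by
      rw [hq]; simp [rot, hc, hs, Prod.ext_iff]; constructor <;> ring
    rw [he]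
    exact h3
  have hγ : HasDerivAt (fun s' => ((s', rot ω s' z) : ℝ × (ℝ × ℝ)))
      ((1 : ℝ), ((ω * q.2, -(ω * q.1)) : ℝ × ℝ)) t :=
    HasDerivAt.prodMk (hasDerivAt_id t) hd1
  have hTd : deriv (fun s' => u s' (rot ω s' z)) t
      = fderiv ℝ (fun p : ℝ × (ℝ × ℝ) => u p.1 p.2) (t, q) (1, (ω * q.2, -(ω * q.1))) :=
    by have := ((hFd (t, q)).hasFDerivAt.comp_hasDerivAt t hγ).deriv; exact this
  -- split the direction vector
  have hvec : ((1 : ℝ), ((ω * q.2, -(ω * q.1)) : ℝ × ℝ))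
      = ((1 : ℝ), ((0 : ℝ), (0 : ℝ)))
        + (ω * q.2) • ((0 : ℝ), ((1 : ℝ), (0 : ℝ)))
        + (-(ω * q.1)) • ((0 : ℝ), ((0 : ℝ), (1 : ℝ))) := by
    simp [Prod.ext_iff]
  -- time partial derivative at frozen point
  have htp : fderiv ℝ (fun p : ℝ × (ℝ × ℝ) => u p.1 p.2) (t, q) (1, ((0 : ℝ), (0 : ℝ)))
      = deriv (fun s' => u s' q) t :=
    (tderiv_eq (fun p : ℝ × (ℝ × ℝ) => u p.1 p.2) t q (hFd (t, q))).symm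
  -- spatial partials via F
  have hsp : ∀ w : ℝ × ℝ,
      fderiv ℝ (fun p : ℝ × (ℝ × ℝ) => u p.1 p.2) (t, q) ((0 : ℝ), w)
        = fderiv ℝ (u t) q w := by
    intro w
    have hP : HasFDerivAt (fun y : ℝ × ℝ => ((t, y) : ℝ × (ℝ × ℝ)))
        (((0 : (ℝ × ℝ) →L[ℝ] ℝ)).prod (ContinuousLinearMap.id ℝ (ℝ × ℝ))) q :=
      (hasFDerivAt_const t q).prodMk (hasFDerivAt_id q)
    have h2 : fderiv ℝ (u t) q
        = (fderiv ℝ (fun p : ℝ × (ℝ × ℝ) => u p.1 p.2) (t, q)).comp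
          (((0 : (ℝ × ℝ) →L[ℝ] ℝ)).prod (ContinuousLinearMap.id ℝ (ℝ × ℝ))) :=
      ((hFd (t, q)).hasFDerivAt.comp q hP).fderiv
    rw [h2]; rfl
  have hPx : fderiv ℝ (u t) q (1, 0) = pderivX (u t) q := (pderivX_eq (u t) q (hfd q)).symm
  have hPy : fderiv ℝ (u t) q (0, 1) = pderivY (u t) q := (pderivY_eq (u t) q (hfd q)).symm
  have hTd2 : deriv (fun s' => u s' (rot ω s' z)) t
      = deriv (fun s' => u s' q) t + (ω * q.2 : ℝ) * pderivX (u t) q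
        + (-(ω * q.1) : ℝ) * pderivY (u t) q := by
    rw [hTd, hvec]
    simp only [map_add, map_smul, htp, hsp, hPx, hPy, Complex.real_smul]
  -- conclude
  have hg := hgpe t q
  simp only [Lz] at hg
  rw [hTd2, hlapg]
  push_cast at hg ⊢
  linear_combination hg
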